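/- Let g be the 2-dimensional Lie algebra with basis X₁, X₂ and [X₁,X₂] = X₁, graded by V₀ = span{X₂}, V₁ = span{X₁}. Let S = S_K^(3) with resonant decomposition S₀ = {λ2,λ3,λ4}, S₁ = {λ1,λ4}. Then the 0_S-reduction of the resonant subalgebra of S × g is a 3-dimensional Lie algebra with basis Y₁ = λ1⊗X₁, Y₂ = λ2⊗X₂, Y₃ = λ3⊗X₂ satisfying [Y₁,Y₂]=0, [Y₂,Y₃]=0, [Y₃,Y₁]=−Y₁; i.e., it is isomorphic to the Bianchi type III algebra ([X₁,X₂]=[X₂,X₃]=0, [X₁,X₃]=X₁). -/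

import Mathlib

/-- The multiplication table of the semigroup `S_K^(3)` on `{λ1,...,λ4}`,
encoded with `λ_{i+1} ↔ (i : Fin 4)`. -/
def mulSK3 : Fin 4 → Fin 4 → Fin 4 :=
  ![![3, 3, 0, 3],
    ![3, 1, 1, 3],
    ![0, 1, 2, 3],
    ![3, 3, 3, 3]]

/-- The bracket of the expanded algebra on `Fin 4 → g` associated to an explicit
multiplication table `mul`: the bilinear extension of
`[λα ⊗ X, λβ ⊗ Y] = (λα·λβ) ⊗ [X, Y]`. -/
def exBr (mul : Fin 4 → Fin 4 → Fin 4) {g : Type*} [LieRing g]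
    (f₁ f₂ : Fin 4 → g) : Fin 4 → g :=
  fun γ => ∑ p : Fin 4 × Fin 4, if mul p.1 p.2 = γ then ⁅f₁ p.1, f₂ p.2⁆ else 0

/-- The basis element `λ ⊗ x`, as the function supported at `λ`. -/
def basE {S : Type*} [DecidableEq S] {g : Type*} [Zero g] (l : S) (x : g) : S → g :=
  fun μ => if μ = l then x else 0

/-- Let `g` be the 2-dimensional Lie algebra with basis `X₁, X₂`, `[X₁,X₂] = X₁`,
graded by `V₀ = span{X₂}`, `V₁ = span{X₁}`.  For `S = S_K^(3)` with resonant
decomposition `S₀ = {λ2,λ3,λ4}`, `S₁ = {λ1,λ4}`, the `0_S`-reduction of the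
resonant subalgebra of `S × g` is a 3-dimensional Lie algebra with basis
`Y₁ = λ1⊗X₁`, `Y₂ = λ2⊗X₂`, `Y₃ = λ3⊗X₂` satisfying `[Y₁,Y₂] = 0`, `[Y₂,Y₃] = 0`
and `[Y₃,Y₁] = -Y₁`, i.e. it is (isomorphic to) the Bianchi type III algebra. -/
theorem stmt6 (K : Type*) [Field K] (g : Type*) [LieRing g] [LieAlgebra K g]
    (X₁ X₂ : g) (hli : LinearIndependent K ![X₁, X₂])
    (hspan : Submodule.span K {X₁, X₂} = ⊤)
    (hbr : ⁅X₁, X₂⁆ = X₁) :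
    let Y₁ : Fin 4 → g := basE 0 X₁
    let Y₂ : Fin 4 → g := basE 1 X₂
    let Y₃ : Fin 4 → g := basE 2 X₂
    -- the ideal `λ4 ⊗ g` giving the `0_S`-reduction
    let I : Submodule K (Fin 4 → g) :=
      Submodule.span K {f | ∃ x : g, f = basE 3 x}
    -- the resonant subalgebra `(S₀ × V₀) ⊕ (S₁ × V₁)`
    let R : Submodule K (Fin 4 → g) :=
      Submodule.span K {basE 1 X₂, basE 2 X₂, basE 3 X₂, basE 0 X₁, basE 3 X₁}
    (exBr mulSK3 Y₁ Y₂ ∈ I) ∧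
    (exBr mulSK3 Y₂ Y₃ ∈ I) ∧
    (exBr mulSK3 Y₃ Y₁ + Y₁ ∈ I) ∧
    LinearIndependent K ![I.mkQ Y₁, I.mkQ Y₂, I.mkQ Y₃] ∧
    Submodule.span K {I.mkQ Y₁, I.mkQ Y₂, I.mkQ Y₃} = R.map I.mkQ := by
  intro Y₁ Y₂ Y₃ I R
  have hX₁ : X₁ ≠ 0 := by simpa using hli.ne_zero 0
  have hX₂ : X₂ ≠ 0 := by simpa using hli.ne_zero 1
  have hmemI : ∀ x : g, basE 3 x ∈ I := fun x => Submodule.subset_span ⟨x, rfl⟩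
  have hIval : ∀ f ∈ I, ∀ i : Fin 4, i ≠ 3 → f i = 0 := by
    intro f hf i hi
    have hle : I ≤ LinearMap.ker (LinearMap.proj i : (Fin 4 → g) →ₗ[K] g) := by
      apply Submodule.span_le.mpr
      rintro _ ⟨x, rfl⟩
      simp [LinearMap.mem_ker, basE, hi]
    exact hle hf
  have h1 : exBr mulSK3 Y₁ Y₂ = basE 3 X₁ := by
    funext γ
    simp only [exBr, Fintype.sum_prod_type, Fin.sum_univ_four, Y₁, Y₂, basE, mulSK3]
    fin_cases γ <;> simp [hbr]
  have h2 : exBr mulSK3 Y₂ Y₃ = 0 := by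
    funext γ
    simp only [exBr, Fintype.sum_prod_type, Fin.sum_univ_four, Y₂, Y₃, basE, mulSK3]
    fin_cases γ <;> simp
  have hbr' : ⁅X₂, X₁⁆ = -X₁ := by rw [← lie_skew, hbr]
  have h3 : exBr mulSK3 Y₃ Y₁ + Y₁ = 0 := by
    funext γ
    simp only [Pi.add_apply, exBr, Fintype.sum_prod_type, Fin.sum_univ_four, Y₁, Y₃, basE,
      mulSK3]
    fin_cases γ <;> simp [hbr']
  refine ⟨h1 ▸ hmemI X₁, h2 ▸ I.zero_mem, h3 ▸ I.zero_mem, ?_, ?_⟩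
  · rw [Fintype.linearIndependent_iff]
    intro c hc
    have hmem : c 0 • Y₁ + c 1 • Y₂ + c 2 • Y₃ ∈ I := by
      rw [← Submodule.Quotient.mk_eq_zero I]
      have := hc
      simp only [Fin.sum_univ_three, Matrix.cons_val_zero, Matrix.cons_val_one,
        Matrix.head_cons, Matrix.cons_val_two, Matrix.tail_cons] at this
      simpa [Submodule.Quotient.mk_smul, Submodule.Quotient.mk_add, Submodule.mkQ_apply] using this
    intro i
    fin_cases i
    · have h0 := hIval _ hmem 0 (by decide)
      simp only [Pi.add_apply, Pi.smul_apply, Y₁, Y₂, Y₃, basE] at h0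
      norm_num [Fin.ext_iff, hX₁] at h0
      exact h0
    · have h0 := hIval _ hmem 1 (by decide)
      simp only [Pi.add_apply, Pi.smul_apply, Y₁, Y₂, Y₃, basE] at h0
      norm_num [Fin.ext_iff, hX₂] at h0
      exact h0
    · have h0 := hIval _ hmem 2 (by decide)
      simp only [Pi.add_apply, Pi.smul_apply, Y₁, Y₂, Y₃, basE] at h0
      norm_num [Fin.ext_iff, hX₂] at h0
      exact h0
  · have hzero : ∀ x : g, I.mkQ (basE 3 x) = 0 := fun x => by
      simpa [Submodule.mkQ_apply, Submodule.Quotient.mk_eq_zero] using hmemI x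
    apply le_antisymm
    · rw [Submodule.span_le]
      rintro x hx
      simp only [Set.mem_insert_iff, Set.mem_singleton_iff] at hx
      rcases hx with rfl | rfl | rfl
      · exact ⟨Y₁, Submodule.subset_span (by simp [Y₁]), rfl⟩
      · exact ⟨Y₂, Submodule.subset_span (by simp [Y₂]), rfl⟩
      · exact ⟨Y₃, Submodule.subset_span (by simp [Y₃]), rfl⟩
    · rw [Submodule.map_span, Submodule.span_le]
      rintro _ ⟨f, hf, rfl⟩
      simp only [Set.mem_insert_iff, Set.mem_singleton_iff] at hf
      rcases hf with rfl | rfl | rfl | rfl | rfl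
      · exact Submodule.subset_span (by simp [Y₂])
      · exact Submodule.subset_span (by simp [Y₃])
      · rw [hzero]; exact Submodule.zero_mem _
      · exact Submodule.subset_span (by simp [Y₁])
      · rw [hzero]; exact Submodule.zero_mem _
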